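/- Let v, w ∈ ℝ³ satisfy |v| ≥ 2, |w − v| ≥ 2, and 2 ≤ |w| ≤ 2√2. If p is a point on the segment from the origin 0 to w that is equidistant from 0 and v (that is, |p| = |p − v|, equivalently ⟨p, v⟩ = |v|²/2), then |p| ≥ √2. The minimum value √2 is attained for the right triangle with |v| = 2, |w − v| = 2, |w| = 2√2. -/

import Mathlib

open MeasureTheory Real

noncomputable section

abbrev E3 : Type := EuclideanSpace ℝ (Fin 3)

/-- The density of the regular octahedron. -/
def δoct : ℝ := (-3 * π + 12 * arccos (1 / Real.sqrt 3)) / Real.sqrt 8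

theorem aux_real_ineq (a b c t : ℝ) (ha : 2 ≤ a) (hb : 2 ≤ b) (hb2 : b ≤ 2 * Real.sqrt 2)
    (ht : 0 ≤ t) (key : 2 * (t * c) = a ^ 2) (hwv : 4 ≤ b ^ 2 - 2 * c + a ^ 2) :
    Real.sqrt 2 ≤ t * b := by
  have hs2 : (Real.sqrt 2) ^ 2 = 2 := Real.sq_sqrt (by norm_num)
  have hs2p : 0 < Real.sqrt 2 := Real.sqrt_pos.mpr (by norm_num)
  have ha4 : 4 ≤ a ^ 2 := by nlinarith
  have hb4 : 4 ≤ b ^ 2 := by nlinarith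
  have htc : 0 < t * c := by nlinarith
  have hcpos : 0 < c := by
    rcases lt_or_ge 0 c with h | h
    · exact h
    · exfalso; nlinarith [mul_nonpos_of_nonneg_of_nonpos ht h]
  have hwv2' : 2 * c ≤ a ^ 2 + b ^ 2 - 4 := by nlinarith
  have hmain : Real.sqrt 2 * (a ^ 2 + b ^ 2 - 4) ≤ a ^ 2 * b := by
    nlinarith [mul_nonneg (by nlinarith : (0:ℝ) ≤ a ^ 2 - 4)
        (by nlinarith : (0:ℝ) ≤ b - Real.sqrt 2),
      mul_nonneg (by nlinarith : (0:ℝ) ≤ b)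
        (by nlinarith : (0:ℝ) ≤ 4 - Real.sqrt 2 * b)]
  have hfin : Real.sqrt 2 * (2 * c) ≤ (t * b) * (2 * c) := by
    nlinarith [mul_le_mul_of_nonneg_left hwv2' hs2p.le, hmain, key,
      mul_le_mul_of_nonneg_left key.le (by nlinarith : (0:ℝ) ≤ b)]
  exact le_of_mul_le_mul_right hfin (by positivity)

/-- If `|v| ≥ 2`, `|w - v| ≥ 2` and `2 ≤ |w| ≤ 2√2`, then any point `p` on the segment
from `0` to `w` equidistant from `0` and `v` satisfies `|p| ≥ √2`; the minimum `√2` is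
attained for the right triangle with `|v| = 2`, `|w - v| = 2`, `|w| = 2√2`. -/
theorem bisector_point_on_segment_ge_sqrt_two :
    (∀ v w p : E3, 2 ≤ ‖v‖ → 2 ≤ ‖w - v‖ → 2 ≤ ‖w‖ → ‖w‖ ≤ 2 * Real.sqrt 2 →
      p ∈ segment ℝ (0 : E3) w → ‖p‖ = ‖p - v‖ → Real.sqrt 2 ≤ ‖p‖) ∧
    (∃ v w p : E3, ‖v‖ = 2 ∧ ‖w - v‖ = 2 ∧ ‖w‖ = 2 * Real.sqrt 2 ∧
      p ∈ segment ℝ (0 : E3) w ∧ ‖p‖ = ‖p - v‖ ∧ ‖p‖ = Real.sqrt 2) := by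
  have hs2 : (Real.sqrt 2) ^ 2 = 2 := Real.sq_sqrt (by norm_num)
  have hs2p : 0 < Real.sqrt 2 := Real.sqrt_pos.mpr (by norm_num)
  constructor
  · rintro v w p hv hwv hw hw2 hseg hp
    obtain ⟨u, t, hu, ht, hut, hp'⟩ := hseg
    rw [smul_zero, zero_add] at hp'
    subst hp'
    have hsq : ‖t • w‖ ^ 2 = ‖t • w - v‖ ^ 2 := by rw [hp]
    rw [norm_sub_sq_real, real_inner_smul_left] at hsq
    have key : 2 * (t * (inner ℝ w v : ℝ)) = ‖v‖ ^ 2 := by linarith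
    have hwv2 : 4 ≤ ‖w - v‖ ^ 2 := by nlinarith
    rw [norm_sub_sq_real] at hwv2
    rw [norm_smul, Real.norm_eq_abs, abs_of_nonneg ht]
    exact aux_real_ineq ‖v‖ ‖w‖ (inner ℝ w v) t hv hw hw2 ht key hwv2
  · refine ⟨!₂[2, 0, 0], !₂[2, 2, 0], !₂[1, 1, 0], ?_, ?_, ?_, ?_, ?_, ?_⟩
    · rw [EuclideanSpace.norm_eq]
      simp [Fin.sum_univ_three]
    · rw [EuclideanSpace.norm_eq]
      simp [Fin.sum_univ_three, PiLp.sub_apply]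
    · rw [EuclideanSpace.norm_eq]
      simp [Fin.sum_univ_three]
      rw [show ((2:ℝ) ^ 2 + 2 ^ 2 : ℝ) = 2 ^ 2 * 2 by norm_num, Real.sqrt_mul (by positivity),
        Real.sqrt_sq (by norm_num)]
    · exact ⟨1/2, 1/2, by norm_num, by norm_num, by norm_num, by
        ext i; fin_cases i <;> simp [PiLp.smul_apply, PiLp.add_apply]⟩
    · rw [EuclideanSpace.norm_eq, EuclideanSpace.norm_eq]
      simp [Fin.sum_univ_three, PiLp.sub_apply]
      norm_num
    · rw [EuclideanSpace.norm_eq]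
      simp [Fin.sum_univ_three]
      norm_num
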